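/- Let G be a group and H a subgroup of G. Then for all natural numbers j ≤ k, C_{E_k(H)}^{j}(H) = Z_j(E_k(H)). -/

import Mathlib

open scoped commutatorElement

/-- Iterated centralizer `C_S^k(A)` of the subset `A` inside the ambient (sub)group
given by the set `S`, following Bryant: `C^0 = {1}` and
`C^{k+1}(A) = {x ∈ ⋂_{n ≤ k} N_S(C^n(A)) | [x, a] ∈ C^k(A) for all a ∈ A}`. -/
def iterCent {G : Type*} [Group G] (S A : Set G) : ℕ → Set G
  | 0 => {1}
  | k + 1 =>
    {x | x ∈ S ∧
      (∀ n, n ≤ k → ∀ h ∈ S, (x * h * x⁻¹ ∈ iterCent S A n ↔ h ∈ iterCent S A n)) ∧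
      ∀ a ∈ A, ⁅x, a⁆ ∈ iterCent S A k}
  termination_by n => n
  decreasing_by all_goals omega

/-- The `E_k`-envelopes of a subgroup (given as the set `H`) in `G`:
`E_0(H) = G` and `E_{k+1}(H) = {g ∈ E_k(H) | [g, C_{E_k(H)}^{k+1}(H)] ⊆ C_{E_k(H)}^k(H)}`. -/
def env {G : Type*} [Group G] (H : Set G) : ℕ → Set G
  | 0 => Set.univ
  | k + 1 =>
    {g | g ∈ env H k ∧
      ∀ c ∈ iterCent (env H k) H (k + 1), ⁅g, c⁆ ∈ iterCent (env H k) H k}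

/-- The upper central series `Z_k` of the (sub)group given by the set `S`:
`Z_0 = {1}` and `Z_{k+1} = {x ∈ S | [x, g] ∈ Z_k for all g ∈ S}`. -/
def upperCent {G : Type*} [Group G] (S : Set G) : ℕ → Set G
  | 0 => {1}
  | k + 1 => {x | x ∈ S ∧ ∀ g ∈ S, ⁅x, g⁆ ∈ upperCent S k}

section Aux

variable {G : Type*} [Group G]

private lemma comm_aux1 (x y g : G) : ⁅x*y, g⁆ = x * ⁅y,g⁆ * x⁻¹ * ⁅x,g⁆ := by group
private lemma comm_aux2 (x g : G) : ⁅x⁻¹, g⁆ = x⁻¹ * ⁅x,g⁆⁻¹ * x⁻¹⁻¹ := by group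
private lemma comm_aux3 (s x g : G) : ⁅s*x*s⁻¹, g⁆ = s * ⁅x, s⁻¹*g*s⁆ * s⁻¹ := by group
private lemma comm_aux4 (x g : G) : ⁅x, g⁆ = ⁅g,x⁆⁻¹ := by group
private lemma comm_aux5 (z c : G) : ⁅z, c⁆ = z * (c * z⁻¹ * c⁻¹) := by group
private lemma comm_one_l (g : G) : ⁅(1:G), g⁆ = 1 := by group

/-- `S` is (the carrier of) a subgroup. -/
def SubSet (S : Set G) : Prop :=
  1 ∈ S ∧ (∀ x ∈ S, ∀ y ∈ S, x * y ∈ S) ∧ (∀ x ∈ S, x⁻¹ ∈ S)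

lemma upperCent_zero (S : Set G) : upperCent S 0 = {1} := by rw [upperCent]

lemma upperCent_succ_mem (S : Set G) (j : ℕ) (x : G) :
    x ∈ upperCent S (j+1) ↔ x ∈ S ∧ ∀ g ∈ S, ⁅x, g⁆ ∈ upperCent S j := by
  rw [upperCent]; rfl

lemma uc_struct {S : Set G} (hS : SubSet S) : ∀ j,
    (upperCent S j ⊆ S) ∧ (1 ∈ upperCent S j) ∧
    (∀ x ∈ upperCent S j, ∀ y ∈ upperCent S j, x * y ∈ upperCent S j) ∧
    (∀ x ∈ upperCent S j, x⁻¹ ∈ upperCent S j) ∧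
    (∀ s ∈ S, ∀ x ∈ upperCent S j, s * x * s⁻¹ ∈ upperCent S j) := by
  intro j
  induction j with
  | zero =>
    rw [upperCent_zero]
    refine ⟨?_, rfl, ?_, ?_, ?_⟩
    · intro x hx; rw [Set.mem_singleton_iff] at hx; subst hx; exact hS.1
    · intro x hx y hy
      rw [Set.mem_singleton_iff] at hx hy; subst hx; subst hy
      simp
    · intro x hx; rw [Set.mem_singleton_iff] at hx; subst hx; simp
    · intro s hs x hx; rw [Set.mem_singleton_iff] at hx; subst hx; simp
  | succ j IH =>
    obtain ⟨hsub, h1, hmul, hinv, hconj⟩ := IH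
    refine ⟨?_, ?_, ?_, ?_, ?_⟩
    · intro x hx; exact ((upperCent_succ_mem S j x).1 hx).1
    · rw [upperCent_succ_mem]
      exact ⟨hS.1, fun g hg => by rw [comm_one_l]; exact h1⟩
    · intro x hx y hy
      rw [upperCent_succ_mem] at hx hy ⊢
      refine ⟨hS.2.1 x hx.1 y hy.1, fun g hg => ?_⟩
      rw [comm_aux1]
      exact hmul _ (hconj x hx.1 _ (hy.2 g hg)) _ (hx.2 g hg)
    · intro x hx
      rw [upperCent_succ_mem] at hx ⊢
      refine ⟨hS.2.2 x hx.1, fun g hg => ?_⟩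
      rw [comm_aux2]
      exact hconj x⁻¹ (hS.2.2 x hx.1) _ (hinv _ (hx.2 g hg))
    · intro s hs x hx
      rw [upperCent_succ_mem] at hx ⊢
      refine ⟨hS.2.1 _ (hS.2.1 s hs x hx.1) _ (hS.2.2 s hs), fun g hg => ?_⟩
      rw [comm_aux3]
      exact hconj s hs _ (hx.2 _ (hS.2.1 _ (hS.2.1 _ (hS.2.2 s hs) g hg) s hs))

lemma uc_mono {S : Set G} (hS : SubSet S) : ∀ j, upperCent S j ⊆ upperCent S (j+1) := by
  intro j
  induction j with
  | zero =>
    intro x hx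
    rw [upperCent_zero, Set.mem_singleton_iff] at hx; subst hx
    exact (uc_struct hS 1).2.1
  | succ j IH =>
    intro x hx
    rw [upperCent_succ_mem] at hx ⊢
    exact ⟨hx.1, fun g hg => IH (hx.2 g hg)⟩

lemma uc_le {S : Set G} (hS : SubSet S) {j k : ℕ} (h : j ≤ k) :
    upperCent S j ⊆ upperCent S k := by
  induction h with
  | refl => exact le_refl _
  | step _ IH => exact IH.trans (uc_mono hS _)

lemma iterCent_zero (S A : Set G) : iterCent S A 0 = {1} := by rw [iterCent]

lemma iterCent_succ_eq {S : Set G} (A : Set G) (hS : SubSet S) (j : ℕ)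
    (heq : ∀ n, n ≤ j → iterCent S A n = upperCent S n) :
    iterCent S A (j+1) = {x | x ∈ S ∧ ∀ a ∈ A, ⁅x, a⁆ ∈ upperCent S j} := by
  rw [iterCent]
  ext x
  simp only [Set.mem_setOf_eq]
  constructor
  · rintro ⟨hxS, -, hcomm⟩
    exact ⟨hxS, fun a ha => (heq j le_rfl) ▸ hcomm a ha⟩
  · rintro ⟨hxS, hcomm⟩
    refine ⟨hxS, fun n hn h hh => ?_, fun a ha => by rw [heq j le_rfl]; exact hcomm a ha⟩
    rw [heq n hn]
    constructor
    · intro hmem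
      have h2 := (uc_struct hS n).2.2.2.2 x⁻¹ (hS.2.2 x hxS) _ hmem
      have e : x⁻¹ * (x*h*x⁻¹) * x⁻¹⁻¹ = h := by group
      rwa [e] at h2
    · intro hmem
      exact (uc_struct hS n).2.2.2.2 x hxS h hmem

lemma main_induction (H : Subgroup G) : ∀ k : ℕ,
    SubSet (env (H : Set G) k) ∧ ((H : Set G) ⊆ env (H : Set G) k) ∧
    ∀ j, j ≤ k →
      iterCent (env (H : Set G) k) (H : Set G) j = upperCent (env (H : Set G) k) j := by
  intro k
  induction k with
  | zero =>
    have h0 : env (H : Set G) 0 = Set.univ := by rw [env]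
    rw [h0]
    refine ⟨⟨Set.mem_univ 1, fun _ _ _ _ => Set.mem_univ _, fun _ _ => Set.mem_univ _⟩,
      fun a _ => Set.mem_univ a, fun j hj => ?_⟩
    obtain rfl : j = 0 := Nat.le_zero.mp hj
    rw [iterCent_zero, upperCent_zero]
  | succ k IH =>
    obtain ⟨hS, hHS, heq⟩ := IH
    set S : Set G := env (H : Set G) k with hSdef
    set Zk : Set G := upperCent S k with hZkdef
    set D : Set G := iterCent S (H : Set G) (k+1) with hDdef
    have ucS := uc_struct hS
    have hZkS : Zk ⊆ S := (ucS k).1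
    have hDmem : ∀ x, x ∈ D ↔ x ∈ S ∧ ∀ a ∈ (H : Set G), ⁅x, a⁆ ∈ Zk := by
      intro x
      rw [hDdef, iterCent_succ_eq (H : Set G) hS k heq]
      rfl
    have hTdef : env (H : Set G) (k+1) =
        {g | g ∈ S ∧ ∀ c ∈ D, ⁅g, c⁆ ∈ Zk} := by
      rw [env, heq k le_rfl]
    set T : Set G := env (H : Set G) (k+1) with hT
    have hTmem : ∀ g, g ∈ T ↔ g ∈ S ∧ ∀ c ∈ D, ⁅g, c⁆ ∈ Zk := by
      intro g; rw [hTdef]; rfl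
    have hTS : T ⊆ S := fun g hg => ((hTmem g).1 hg).1
    -- T is a subgroup
    have hSubT : SubSet T := by
      refine ⟨?_, ?_, ?_⟩
      · rw [hTmem]
        exact ⟨hS.1, fun c hc => by rw [comm_one_l]; exact (ucS k).2.1⟩
      · intro x hx y hy
        rw [hTmem] at hx hy ⊢
        refine ⟨hS.2.1 x hx.1 y hy.1, fun c hc => ?_⟩
        rw [comm_aux1]
        exact (ucS k).2.2.1 _ ((ucS k).2.2.2.2 x hx.1 _ (hy.2 c hc)) _ (hx.2 c hc)
      · intro x hx
        rw [hTmem] at hx ⊢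
        refine ⟨hS.2.2 x hx.1, fun c hc => ?_⟩
        rw [comm_aux2]
        exact (ucS k).2.2.2.2 x⁻¹ (hS.2.2 x hx.1) _ ((ucS k).2.2.2.1 _ (hx.2 c hc))
    -- H ⊆ T
    have hHT : (H : Set G) ⊆ T := by
      intro a ha
      rw [hTmem]
      refine ⟨hHS ha, fun c hc => ?_⟩
      rw [comm_aux4]
      exact (ucS k).2.2.2.1 _ (((hDmem c).1 hc).2 a ha)
    -- Zk ⊆ T
    have hZkT : Zk ⊆ T := by
      intro z hz
      rw [hTmem]
      refine ⟨hZkS hz, fun c hc => ?_⟩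
      rw [comm_aux5]
      have hcS : c ∈ S := ((hDmem c).1 hc).1
      exact (ucS k).2.2.1 z hz _
        ((ucS k).2.2.2.2 c hcS _ ((ucS k).2.2.2.1 z hz))
    -- key property of D ∩ T
    have hDT : ∀ x, x ∈ D → ∀ g ∈ T, ⁅x, g⁆ ∈ Zk := by
      intro x hx g hg
      rw [comm_aux4]
      exact (ucS k).2.2.2.1 _ (((hTmem g).1 hg).2 x hx)
    -- sub-induction: for j ≤ k, Z_j(T) = Z_j(S) and C^j_T = Z_j(T)
    have Q : ∀ j, j ≤ k →
        upperCent T j = upperCent S j ∧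
        iterCent T (H : Set G) j = upperCent T j := by
      intro j
      induction j using Nat.strong_induction_on with
      | _ j IHj =>
        intro hjk
        rcases j with - | m
        · simp only [upperCent_zero, iterCent_zero]
          exact ⟨trivial, trivial⟩
        · 
          have heqT : ∀ n, n ≤ m → iterCent T (H : Set G) n = upperCent T n :=
            fun n hn => (IHj n (Nat.lt_succ_of_le hn) (le_trans (le_trans hn (Nat.le_succ m)) hjk)).2
          have hZm : upperCent T m = upperCent S m :=
            (IHj m (Nat.lt_succ_self m) (le_trans (Nat.le_succ m) hjk)).1
          have hCm1 : iterCent T (H : Set G) (m+1) =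
              {x | x ∈ T ∧ ∀ a ∈ (H : Set G), ⁅x, a⁆ ∈ upperCent T m} :=
            iterCent_succ_eq (H : Set G) hSubT m heqT
          -- from commutator conditions with H inside T, get membership in Z_{m+1}(S)
          have key : ∀ x ∈ T, (∀ a ∈ (H : Set G), ⁅x, a⁆ ∈ upperCent T m) →
              x ∈ upperCent S (m+1) := by
            intro x hx hcomm
            rw [← heq (m+1) hjk,
              iterCent_succ_eq (H : Set G) hS m (fun n hn => heq n (le_trans (le_trans hn (Nat.le_succ m)) hjk))]
            refine ⟨hTS hx, fun a ha => ?_⟩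
            rw [← hZm]
            exact hcomm a ha
          have hZeq : upperCent T (m+1) = upperCent S (m+1) := by
            ext x
            rw [upperCent_succ_mem, upperCent_succ_mem]
            constructor
            · rintro ⟨hxT, hx⟩
              have := key x hxT (fun a ha => hx a (hHT ha))
              rw [upperCent_succ_mem] at this
              exact this
            · rintro ⟨hxS, hx⟩
              have hxT : x ∈ T := by
                refine hZkT (uc_le hS hjk ?_)
                rw [upperCent_succ_mem]
                exact ⟨hxS, hx⟩
              refine ⟨hxT, fun g hg => ?_⟩
              rw [hZm]
              exact hx g (hTS hg)
          refine ⟨hZeq, ?_⟩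
          rw [hCm1]
          ext x
          simp only [Set.mem_setOf_eq]
          constructor
          · rintro ⟨hxT, hcomm⟩
            rw [hZeq]
            exact key x hxT hcomm
          · intro hx
            rw [upperCent_succ_mem] at hx
            exact ⟨hx.1, fun a ha => hx.2 a (hHT ha)⟩
    -- conclude
    refine ⟨hSubT, hHT, fun j hj => ?_⟩
    rcases Nat.lt_succ_iff_lt_or_eq.mp (Nat.lt_succ_of_le hj) with hj' | rfl
    · exact (Q j (Nat.lt_succ_iff.mp hj')).2
    · -- j = k+1
      have heqT : ∀ n, n ≤ k → iterCent T (H : Set G) n = upperCent T n :=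
        fun n hn => (Q n hn).2
      have hZT : upperCent T k = Zk := (Q k le_rfl).1
      rw [iterCent_succ_eq (H : Set G) hSubT k heqT]
      ext x
      simp only [Set.mem_setOf_eq]
      rw [upperCent_succ_mem]
      constructor
      · rintro ⟨hxT, hcomm⟩
        have hxD : x ∈ D := by
          rw [hDmem]
          exact ⟨hTS hxT, fun a ha => by rw [← hZT]; exact hcomm a ha⟩
        exact ⟨hxT, fun g hg => by rw [hZT]; exact hDT x hxD g hg⟩
      · rintro ⟨hxT, hx⟩
        exact ⟨hxT, fun a ha => hx a (hHT ha)⟩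

end Aux

/-- For all `j ≤ k`, `C_(E_k(H))^j(H) = Z_j(E_k(H))`. -/
theorem iterCent_env_eq_upperCent {G : Type*} [Group G] (H : Subgroup G) (j k : ℕ)
    (hjk : j ≤ k) :
    iterCent (env (H : Set G) k) (H : Set G) j = upperCent (env (H : Set G) k) j :=
  (main_induction H k).2.2 j hjk
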